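/- For positive integers m and c, the classical Kloosterman sum satisfies the Vardi identity: ∑_{a=1, gcd(a,c)=1}^{c-1} e(12·m·s(a;c)) = S(m, m; c), where e(x) = e^{2πix}, s(a;c) is the Dedekind sum, and S(m,n;c) = ∑_{a: gcd(a,c)=1, ad ≡ 1 mod c} e((ma + nd)/c). -/

import Mathlib

open scoped Classical in
/-- The sawtooth function `((x))`. -/
noncomputable def sawtooth (x : ℝ) : ℝ :=
  if ∃ n : ℤ, (n : ℝ) = x then 0 else Int.fract x - 1/2

/-- The Dedekind sum `s(a;c)`. -/
noncomputable def dedekindSum (a c : ℤ) : ℝ :=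
  ∑ n ∈ Finset.Ico (1:ℤ) c, sawtooth ((n : ℝ) / c) * sawtooth ((n * a : ℝ) / c)

/-- `e(x) = exp(2π i x)`. -/
noncomputable def eTwoPi (x : ℝ) : ℂ := Complex.exp (2 * Real.pi * Complex.I * x)

/-- The classical Kloosterman sum `S(m,n;c)`, as a sum over `1 ≤ a ≤ c-1` with
`gcd(a,c) = 1`, where `d` denotes the inverse of `a` modulo `c`. -/
noncomputable def kloosterman (m n c : ℕ) : ℂ :=
  ∑ a ∈ (Finset.Ico 1 c).filter (fun a => Nat.gcd a c = 1),
    eTwoPi (((m * a : ℕ) : ℝ) / c + ((n * (((a : ZMod c)⁻¹).val) : ℕ) : ℝ) / c)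

/-! ### Auxiliary lemmas -/

lemma eTwoPi_int_add (z : ℤ) (x : ℝ) : eTwoPi ((z : ℝ) + x) = eTwoPi x := by
  unfold eTwoPi
  have h : 2 * (Real.pi : ℂ) * Complex.I * (((z : ℝ) + x : ℝ) : ℂ)
      = (z : ℂ) * (2 * (Real.pi : ℂ) * Complex.I) + 2 * (Real.pi : ℂ) * Complex.I * (x : ℂ) := by
    push_cast; ring
  rw [h, Complex.exp_add, Complex.exp_int_mul_two_pi_mul_I, one_mul]

lemma sawtooth_eval (x c : ℤ) (hc : 0 < c) (h : ¬ (c ∣ x)) :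
    sawtooth ((x : ℝ) / c) = ((x % c : ℤ) : ℝ) / c - 1/2 := by
  have hc0 : (c : ℝ) ≠ 0 := by exact_mod_cast hc.ne'
  have hcR : (0:ℝ) < c := by exact_mod_cast hc
  have hdm : (c : ℤ) * (x / c) + x % c = x := Int.mul_ediv_add_emod x c
  have hlo : (0 : ℤ) ≤ x % c := Int.emod_nonneg x hc.ne'
  have hhi : x % c < c := Int.emod_lt_of_pos x hc
  have hxd : (x : ℝ) / c = ((x / c : ℤ) : ℝ) + ((x % c : ℤ) : ℝ) / c := by
    have h2 : (c:ℝ) * ((x / c : ℤ):ℝ) + ((x % c : ℤ):ℝ) = (x : ℝ) := by exact_mod_cast hdm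
    field_simp
    linarith
  have hcond : ¬ ∃ n : ℤ, (n : ℝ) = (x : ℝ) / c := by
    rintro ⟨n, hn⟩
    apply h
    have h3 : (x : ℝ) = (n : ℝ) * c := by field_simp at hn; linarith
    have h4 : x = n * c := by exact_mod_cast h3
    exact ⟨n, by linarith⟩
  rw [sawtooth, if_neg hcond, hxd, Int.fract_intCast_add, Int.fract_eq_self.2 ⟨?_, ?_⟩]
  · exact div_nonneg (by exact_mod_cast hlo) hcR.le
  · rw [div_lt_one hcR]; exact_mod_cast hhi

lemma dvd_trans_inv {a d c k : ℤ} (hk : a * d = 1 + c * k) {n : ℤ} (hn : c ∣ n * a) : c ∣ n := by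
  have h1 : c ∣ n * a * d := Dvd.dvd.mul_right hn d
  have h2 : n * a * d = n + c * (n * k) := by rw [mul_assoc, hk]; ring
  rw [h2] at h1
  rcases h1 with ⟨t, ht⟩
  exact ⟨t - n * k, by linarith⟩

lemma sum_emod_bij (a d c : ℤ) (hc : 0 < c) (k : ℤ) (hk : a * d = 1 + c * k) (g : ℤ → ℤ) :
    ∑ n ∈ Finset.Ico (1:ℤ) c, g ((n * a) % c) = ∑ n ∈ Finset.Ico (1:ℤ) c, g n := by
  have hk' : d * a = 1 + c * k := by rw [mul_comm]; exact hk
  have hmem : ∀ (e f : ℤ), e * f = 1 + c * k → ∀ n ∈ Finset.Ico (1:ℤ) c,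
      (n * e) % c ∈ Finset.Ico (1:ℤ) c := by
    intro e f hef n hn
    rw [Finset.mem_Ico] at hn ⊢
    have h0 : 0 ≤ (n * e) % c := Int.emod_nonneg _ hc.ne'
    have h1 : (n * e) % c < c := Int.emod_lt_of_pos _ hc
    have hne : (n * e) % c ≠ 0 := by
      intro h2
      have h3 : c ∣ n * e := Int.dvd_of_emod_eq_zero h2
      have h4 : c ∣ n := dvd_trans_inv hef h3
      have h5 : c ≤ n := Int.le_of_dvd (by omega) h4
      omega
    omega
  have hinv : ∀ (e f : ℤ), e * f = 1 + c * k → ∀ n ∈ Finset.Ico (1:ℤ) c,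
      ((n * e) % c) * f % c = n := by
    intro e f hef n hn
    rw [Finset.mem_Ico] at hn
    have h1 : ((n * e) % c) * f % c = (n * e * f) % c := by
      rw [Int.mul_emod, Int.emod_emod_of_dvd _ dvd_rfl, ← Int.mul_emod]
    have h2 : n * e * f = n + n * k * c := by rw [mul_assoc, hef]; ring
    rw [h1, h2, Int.add_mul_emod_self_right, Int.emod_eq_of_lt (by omega) hn.2]
  refine Finset.sum_nbij' (fun n => (n * a) % c) (fun n => (n * d) % c)
    (hmem a d hk) (hmem d a hk') ?_ ?_ (fun n _ => rfl)
  · exact hinv a d hk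
  · exact hinv d a hk'

lemma Ico_int_succ (kk : ℤ) (h : 1 ≤ kk) :
    Finset.Ico (1:ℤ) (kk + 1) = insert kk (Finset.Ico (1:ℤ) kk) := by
  ext x
  simp only [Finset.mem_Ico, Finset.mem_insert]
  omega

lemma sum_Ico_id (c : ℕ) :
    2 * ∑ n ∈ Finset.Ico (1:ℤ) (c:ℤ), n = (c:ℤ) * ((c:ℤ) - 1) := by
  induction c with
  | zero => simp
  | succ k ih =>
    rcases Nat.eq_zero_or_pos k with hk | hk
    · subst hk; simp
    · have h1 : (1:ℤ) ≤ (k:ℤ) := by exact_mod_cast hk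
      have h2 : ((k+1 : ℕ) : ℤ) = (k:ℤ) + 1 := by push_cast; ring
      rw [h2, Ico_int_succ _ h1, Finset.sum_insert (by simp), mul_add, ih]
      ring

lemma sum_Ico_sq (c : ℕ) :
    6 * ∑ n ∈ Finset.Ico (1:ℤ) (c:ℤ), n^2 = (c:ℤ) * ((c:ℤ) - 1) * (2*(c:ℤ) - 1) := by
  induction c with
  | zero => simp
  | succ k ih =>
    rcases Nat.eq_zero_or_pos k with hk | hk
    · subst hk; simp
    · have h1 : (1:ℤ) ≤ (k:ℤ) := by exact_mod_cast hk
      have h2 : ((k+1 : ℕ) : ℤ) = (k:ℤ) + 1 := by push_cast; ring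
      rw [h2, Ico_int_succ _ h1, Finset.sum_insert (by simp), mul_add, ih]
      ring

lemma card_Ico_int (c : ℕ) (hc : 1 ≤ c) :
    ((Finset.Ico (1:ℤ) (c:ℤ)).card : ℤ) = (c:ℤ) - 1 := by
  rw [Int.card_Ico]
  have h : ((c:ℤ) - 1).toNat = c - 1 := by omega
  rw [h]
  omega

lemma key_dvd (a d k : ℤ) (c : ℕ) (hc : 0 < c) (hk : a * d = 1 + (c:ℤ) * k) :
    ((c:ℤ))^2 ∣ 12 * (∑ n ∈ Finset.Ico (1:ℤ) (c:ℤ), n * ((n * a) % (c:ℤ))) - (c:ℤ) * (a + d) := by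
  set cz : ℤ := (c:ℤ) with hcz
  have hc0 : 0 < cz := by rw [hcz]; exact_mod_cast hc
  set T : ℤ := ∑ n ∈ Finset.Ico (1:ℤ) cz, n * ((n * a) % cz) with hT
  set Q : ℤ := ∑ n ∈ Finset.Ico (1:ℤ) cz, ((n * a) / cz)^2 with hQ
  set S2 : ℤ := ∑ n ∈ Finset.Ico (1:ℤ) cz, n^2 with hS2
  have h1 : cz^2 * Q = (a^2 + 1) * S2 - 2 * a * T := by
    have e1 : cz^2 * Q = ∑ n ∈ Finset.Ico (1:ℤ) cz, (cz * ((n * a) / cz))^2 := by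
      rw [hQ, Finset.mul_sum]
      exact Finset.sum_congr rfl (fun n _ => by ring)
    have e2 : ∀ n ∈ Finset.Ico (1:ℤ) cz,
        (cz * ((n * a) / cz))^2 = a^2 * n^2 + ((n * a) % cz)^2 - 2 * a * (n * ((n * a) % cz)) := by
      intro n _
      have h' : cz * ((n * a) / cz) = n * a - (n * a) % cz := by
        have := Int.mul_ediv_add_emod (n * a) cz
        linarith
      rw [h']; ring
    have e3 : cz^2 * Q = ∑ n ∈ Finset.Ico (1:ℤ) cz,
        (a^2 * n^2 + ((n * a) % cz)^2 - 2 * a * (n * ((n * a) % cz))) := by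
      rw [e1]; exact Finset.sum_congr rfl e2
    have e4 : ∑ n ∈ Finset.Ico (1:ℤ) cz, ((n * a) % cz)^2 = S2 :=
      sum_emod_bij a d cz hc0 k hk (fun x => x^2)
    rw [e3, Finset.sum_sub_distrib, Finset.sum_add_distrib, e4, ← Finset.mul_sum, ← Finset.mul_sum]
    rw [hT, hS2]
    ring
  have h6 : 6 * S2 = cz * (cz - 1) * (2 * cz - 1) := sum_Ico_sq c
  have hco : IsCoprime cz a := ⟨-k, d, by linarith [hk]⟩
  have hdvd : cz^2 ∣ a * (12 * T - cz * (a + d)) := by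
    refine ⟨(a^2 + 1) * (2 * cz - 3) - 6 * Q - k, ?_⟩
    linear_combination 6 * h1 + (a^2 + 1) * h6 - cz * hk
  exact (hco.pow_left).dvd_of_dvd_mul_left hdvd

lemma dedekind_eval (a d k : ℤ) (c : ℕ) (hc2 : 2 ≤ c) (hk : a * d = 1 + (c:ℤ) * k) :
    (4:ℝ) * (c:ℝ)^2 * dedekindSum a (c:ℤ)
      = ((4 * (∑ n ∈ Finset.Ico (1:ℤ) (c:ℤ), n * ((n * a) % (c:ℤ)))
          - (c:ℤ)^2 * ((c:ℤ) - 1) : ℤ) : ℝ) := by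
  set cz : ℤ := (c:ℤ) with hcz
  have hc0 : (0:ℤ) < cz := by rw [hcz]; exact_mod_cast (by omega : 0 < c)
  have hcR : (0:ℝ) < (c:ℝ) := by exact_mod_cast (by omega : 0 < c)
  have hZ : ∑ n ∈ Finset.Ico (1:ℤ) cz, (2*n - cz) * (2*((n * a) % cz) - cz)
      = 4 * (∑ n ∈ Finset.Ico (1:ℤ) cz, n * ((n * a) % cz)) - cz^2 * (cz - 1) := by
    have e1 : ∑ n ∈ Finset.Ico (1:ℤ) cz, (2*n - cz) * (2*((n * a) % cz) - cz)
        = ∑ n ∈ Finset.Ico (1:ℤ) cz,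
            (4 * (n * ((n * a) % cz)) - 2*cz*n - 2*cz*((n * a) % cz) + cz^2) :=
      Finset.sum_congr rfl (fun n _ => by ring)
    rw [e1, Finset.sum_add_distrib, Finset.sum_sub_distrib, Finset.sum_sub_distrib,
      ← Finset.mul_sum, ← Finset.mul_sum, ← Finset.mul_sum,
      sum_emod_bij a d cz hc0 k hk (fun x => x), Finset.sum_const, nsmul_eq_mul]
    have h2 : 2 * ∑ n ∈ Finset.Ico (1:ℤ) cz, n = cz * (cz - 1) := sum_Ico_id c
    have h3 : ((Finset.Ico (1:ℤ) cz).card : ℤ) = cz - 1 := card_Ico_int c (by omega)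
    rw [h3]
    linear_combination (-2*cz) * h2
  have hptw : ∀ n ∈ Finset.Ico (1:ℤ) cz,
      (4:ℝ) * (c:ℝ)^2 * (sawtooth ((n : ℝ) / (cz:ℝ)) * sawtooth ((↑n * ↑a : ℝ) / (cz:ℝ)))
      = (((2*n - cz) * (2*((n * a) % cz) - cz) : ℤ) : ℝ) := by
    intro n hn
    rw [Finset.mem_Ico] at hn
    have hnd : ¬ (cz ∣ n) := by
      intro h
      have := Int.le_of_dvd (by omega) h
      omega
    have hnad : ¬ (cz ∣ n * a) := fun h => hnd (dvd_trans_inv hk h)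
    have s1 : sawtooth ((n : ℝ) / (cz:ℝ)) = (n:ℝ)/(cz:ℝ) - 1/2 := by
      rw [sawtooth_eval n cz hc0 hnd, Int.emod_eq_of_lt (by omega) hn.2]
    have s2 : sawtooth ((↑n * ↑a : ℝ) / (cz:ℝ)) = (((n * a) % cz : ℤ) : ℝ)/(cz:ℝ) - 1/2 := by
      have := sawtooth_eval (n * a) cz hc0 hnad
      rw [← this]
      push_cast
      ring_nf
    rw [s1, s2]
    simp only [hcz]
    push_cast
    field_simp
    ring
  rw [dedekindSum, Finset.mul_sum]
  calc ∑ n ∈ Finset.Ico (1:ℤ) cz,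
        (4:ℝ) * (c:ℝ)^2 * (sawtooth ((n : ℝ) / (cz:ℝ)) * sawtooth ((↑n * ↑a : ℝ) / (cz:ℝ)))
      = ∑ n ∈ Finset.Ico (1:ℤ) cz, (((2*n - cz) * (2*((n * a) % cz) - cz) : ℤ) : ℝ) :=
        Finset.sum_congr rfl hptw
    _ = ((∑ n ∈ Finset.Ico (1:ℤ) cz, (2*n - cz) * (2*((n * a) % cz) - cz) : ℤ) : ℝ) := by
        push_cast; ring
    _ = _ := by exact_mod_cast congrArg (fun z : ℤ => (z : ℝ)) hZ

lemma term_eq (m a c : ℕ) (hc2 : 2 ≤ c) (ha1 : 1 ≤ a) (hac : a < c) (hg : Nat.gcd a c = 1) :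
    eTwoPi (12 * m * dedekindSum a c)
      = eTwoPi (((m * a : ℕ) : ℝ) / c + ((m * (((a : ZMod c)⁻¹).val) : ℕ) : ℝ) / c) := by
  haveI : NeZero c := ⟨by omega⟩
  set d : ℕ := ((a : ZMod c)⁻¹).val with hd
  have hcop : Nat.Coprime a c := hg
  have h1 : ((a * d : ℕ) : ZMod c) = 1 := by
    push_cast
    rw [hd, ZMod.natCast_val, ZMod.cast_id]
    exact ZMod.coe_mul_inv_eq_one a hcop
  obtain ⟨kk, hkk⟩ : ∃ kk, a * d = 1 + c * kk := by
    obtain ⟨t, ht⟩ := (ZMod.natCast_eq_iff c (a * d) 1).mp h1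
    rw [ZMod.val_one_eq_one_mod, Nat.mod_eq_of_lt (by omega : 1 < c)] at ht
    exact ⟨t, by omega⟩
  have hkZ : (a:ℤ) * (d:ℤ) = 1 + (c:ℤ) * (kk:ℤ) := by exact_mod_cast hkk
  set T : ℤ := ∑ n ∈ Finset.Ico (1:ℤ) (c:ℤ), n * ((n * (a:ℤ)) % (c:ℤ)) with hT
  obtain ⟨w, hw⟩ := key_dvd (a:ℤ) (d:ℤ) (kk:ℤ) c (by omega) hkZ
  have hde := dedekind_eval (a:ℤ) (d:ℤ) (kk:ℤ) c hc2 hkZ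
  have hcR : (0:ℝ) < (c:ℝ) := by exact_mod_cast (by omega : 0 < c)
  have harg : 12 * (m:ℝ) * dedekindSum (a:ℤ) (c:ℤ)
      = (((m:ℤ) * w - 3 * (m:ℤ) * ((c:ℤ) - 1) : ℤ) : ℝ)
        + (((m * a : ℕ) : ℝ) / c + ((m * d : ℕ) : ℝ) / c) := by
    have hS : dedekindSum (a:ℤ) (c:ℤ)
        = ((4 * T - (c:ℤ)^2 * ((c:ℤ) - 1) : ℤ) : ℝ) / (4 * (c:ℝ)^2) := by
      rw [eq_div_iff (by positivity)]
      rw [hT]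
      linarith [hde]
    have hwR : 12 * (T:ℝ) - (c:ℝ) * ((a:ℝ) + (d:ℝ)) = (c:ℝ)^2 * (w:ℝ) := by
      exact_mod_cast hw
    rw [hS]
    push_cast
    field_simp
    linear_combination (4*(m:ℝ)) * hwR
  rw [harg, eTwoPi_int_add]

theorem vardi_identity (m c : ℕ) (hm : 0 < m) (hc : 0 < c) :
    ∑ a ∈ (Finset.Ico 1 c).filter (fun a => Nat.gcd a c = 1),
      eTwoPi (12 * m * dedekindSum a c)
    = kloosterman m m c := by
  rw [kloosterman]
  refine Finset.sum_congr rfl ?_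
  intro a ha
  simp only [Finset.mem_filter, Finset.mem_Ico] at ha
  exact term_eq m a c (by omega) (by omega) ha.1.2 ha.2
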